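/- If f : ℝ → ℂ is 2π-periodic, (k−1)-times absolutely continuously differentiable, and f^(k) is of bounded variation on [0, 2π], then the Fourier coefficients d_n of f satisfy d_n = O(1/|n|^{k+1}) as |n| → ∞. -/

import Mathlib

open Real Complex MeasureTheory intervalIntegral

namespace FourierBVAux

open Set


noncomputable def E (n : ℤ) (x : ℝ) : ℂ := Complex.exp (-Complex.I * n * x)

lemma E_periodic (n : ℤ) : Function.Periodic (E n) (2 * π) := fun x => by
  unfold E
  rw [show ((x + 2 * π : ℝ) : ℂ) = (x : ℂ) + 2 * (π : ℂ) by push_cast; ring]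
  rw [show -Complex.I * (n : ℂ) * ((x : ℂ) + 2 * (π : ℂ))
      = -Complex.I * n * x + (-n : ℤ) * (2 * (π : ℂ) * Complex.I) by push_cast; ring]
  rw [Complex.exp_add, Complex.exp_int_mul_two_pi_mul_I, mul_one]

lemma E_continuous (n : ℤ) : Continuous (E n) := by
  unfold E; fun_prop

lemma norm_E (n : ℤ) (x : ℝ) : ‖E n x‖ = 1 := by
  unfold E
  rw [show -Complex.I * (n : ℂ) * (x : ℂ) = ((-(n * x) : ℝ) : ℂ) * Complex.I by push_cast; ring]
  exact Complex.norm_exp_ofReal_mul_I _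

lemma shift_integral {φ : ℝ → ℂ} (hp : Function.Periodic φ (2 * π)) (hc : Continuous φ)
    (n : ℤ) {c : ℝ} (hexp : Complex.exp (Complex.I * n * c) = -1) :
    (∫ x in (-π : ℝ)..π, φ (x + c) * E n x) = - ∫ x in (-π : ℝ)..π, φ x * E n x := by
  have hF : Function.Periodic (fun y => φ y * E n y) (2 * π) := fun x => by
    show φ (x + 2 * π) * E n (x + 2 * π) = φ x * E n x
    rw [hp x, E_periodic n x]
  have h1 : ∀ x : ℝ, φ (x + c) * E n x = -((fun y => φ y * E n y) (x + c)) := by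
    intro x
    have hE : E n x = - E n (x + c) := by
      unfold E
      rw [show -Complex.I * (n : ℂ) * ((x : ℝ) : ℂ)
          = -Complex.I * n * ((x + c : ℝ) : ℂ) + Complex.I * n * (c : ℂ) by push_cast; ring,
        Complex.exp_add, hexp]
      ring
    dsimp only
    rw [hE]; ring
  rw [intervalIntegral.integral_congr (g := fun x => -((fun y => φ y * E n y) (x + c)))
    (fun x _ => h1 x)]
  rw [intervalIntegral.integral_neg, neg_inj]
  rw [intervalIntegral.integral_comp_add_right (fun y => φ y * E n y) c]
  have h2 := hF.intervalIntegral_add_eq (-π + c) (-π)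
  rw [show -π + c + 2 * π = π + c by ring, show -π + 2 * π = π by ring] at h2
  exact h2

lemma norm_sub_le_var {g : ℝ → ℂ} {s : Set ℝ} (hg : LocallyBoundedVariationOn g s)
    {a x y : ℝ} (ha : a ∈ s) (hx : x ∈ s) (hy : y ∈ s) (hxy : x ≤ y) :
    ‖g y - g x‖ ≤ variationOnFromTo g s a y - variationOnFromTo g s a x := by
  rw [← variationOnFromTo.add hg ha hx hy, add_sub_cancel_left]
  have h1 : ‖g y - g x‖ = dist (g x) (g y) := by rw [dist_eq_norm, norm_sub_rev]
  rw [h1, variationOnFromTo.eq_of_le g s hxy, dist_edist]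
  exact ENNReal.toReal_mono (hg x y hx hy)
    (eVariationOn.edist_le g ⟨hx, le_rfl, hxy⟩ ⟨hy, hxy, le_rfl⟩)

lemma exp_I_n_delta (n : ℤ) (hn : n ≠ 0) :
    Complex.exp (Complex.I * n * ((π / |(n : ℝ)| : ℝ) : ℂ)) = -1 := by
  have hnc : ((n : ℝ)) ≠ 0 := by exact_mod_cast hn
  rcases hn.lt_or_gt with hneg | hpos
  · have habs : |(n : ℝ)| = -(n : ℝ) := abs_of_neg (by exact_mod_cast hneg)
    have h1 : Complex.I * n * ((π / |(n : ℝ)| : ℝ) : ℂ) = -((π : ℂ) * Complex.I) := by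
      rw [habs]
      have h2 : ((n : ℂ)) ≠ 0 := by exact_mod_cast hn
      push_cast
      field_simp
    rw [h1, Complex.exp_neg, Complex.exp_pi_mul_I]
    norm_num
  · have habs : |(n : ℝ)| = (n : ℝ) := abs_of_pos (by exact_mod_cast hpos)
    have h1 : Complex.I * n * ((π / |(n : ℝ)| : ℝ) : ℂ) = (π : ℂ) * Complex.I := by
      rw [habs]
      have h2 : ((n : ℂ)) ≠ 0 := by exact_mod_cast hn
      push_cast
      field_simp
    rw [h1, Complex.exp_pi_mul_I]

lemma key {h g : ℝ → ℂ} (hhc : Continuous h) (hhp : Function.Periodic h (2 * π))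
    (hgl : LocallyIntegrable g)
    (hftc : ∀ x, h x = h 0 + ∫ t in (0:ℝ)..x, g t)
    (hbv : BoundedVariationOn g (Set.Icc (-(2 * π)) (2 * π)))
    (n : ℤ) (hn : n ≠ 0) :
    ‖∫ x in (-π : ℝ)..π, h x * E n x‖ ≤
      (π / |(n : ℝ)|) ^ 2 * (eVariationOn g (Set.Icc (-(2 * π)) (2 * π))).toReal / 2 := by
  have hπ := Real.pi_pos
  have hn1 : (1 : ℝ) ≤ |(n : ℝ)| := by exact_mod_cast Int.one_le_abs hn
  set δ := π / |(n : ℝ)| with hδ_def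
  have hδ0 : 0 < δ := div_pos hπ (lt_of_lt_of_le one_pos hn1)
  have hδπ : δ ≤ π := div_le_self hπ.le hn1
  set s : Set ℝ := Set.Icc (-(2 * π)) (2 * π) with hs_def
  have hmem : ∀ x : ℝ, -(2 * π) ≤ x → x ≤ 2 * π → x ∈ s := fun x h1 h2 => ⟨h1, h2⟩
  have hlbv : LocallyBoundedVariationOn g s := hbv.locallyBoundedVariationOn
  set v : ℝ → ℝ := variationOnFromTo g s (-(2 * π)) with hv_def
  have hvmono : MonotoneOn v s :=
    variationOnFromTo.monotoneOn hlbv (hmem _ le_rfl (by linarith))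
  have hvnonneg : ∀ x, -(2 * π) ≤ x → 0 ≤ v x := fun x hx =>
    variationOnFromTo.nonneg_of_le g s hx
  set V := (eVariationOn g s).toReal with hV_def
  have hV0 : 0 ≤ V := ENNReal.toReal_nonneg
  have hvleV : ∀ x ∈ s, v x ≤ V := by
    intro x hx
    rw [hv_def, variationOnFromTo.eq_of_le g s hx.1, hV_def]
    exact ENNReal.toReal_mono hbv (eVariationOn.mono g inter_subset_left)
  have hsub : ∀ a b : ℝ, a ∈ s → b ∈ s → Set.uIcc a b ⊆ s := by
    intro a b ha hb
    rw [hs_def]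
    exact Set.uIcc_subset_Icc ha hb
  have hvint : ∀ a b : ℝ, a ∈ s → b ∈ s → IntervalIntegrable v volume a b := fun a b ha hb =>
    (hvmono.mono (hsub a b ha hb)).intervalIntegrable
  set P : ℝ → ℝ := fun y => ∫ t in (-(2 * π))..y, v t with hP_def
  have hPadd : ∀ a b : ℝ, a ∈ s → b ∈ s → P a + (∫ t in a..b, v t) = P b := by
    intro a b ha hb
    exact integral_add_adjacent_intervals (hvint _ _ (hmem _ le_rfl (by linarith)) ha)
      (hvint _ _ ha hb)
  have hPmono : MonotoneOn P s := by
    intro a ha b hb hab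
    have h1 := hPadd a b ha hb
    have h2 : 0 ≤ ∫ t in a..b, v t :=
      intervalIntegral.integral_nonneg hab (fun u hu => hvnonneg u (by
        have := hu.1; have := ha.1; simp only [hs_def, Set.mem_Icc] at *; linarith))
    linarith
  have hPint : ∀ a b : ℝ, a ∈ s → b ∈ s → IntervalIntegrable P volume a b := fun a b ha hb =>
    (hPmono.mono (hsub a b ha hb)).intervalIntegrable
  have hgint : ∀ a b : ℝ, IntervalIntegrable g volume a b := by
    intro a b
    rw [intervalIntegrable_iff]
    exact (hgl.integrableOn_isCompact isCompact_uIcc).mono_set Set.uIoc_subset_uIcc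
  -- shift trick
  have hexp1 : Complex.exp (Complex.I * n * ((δ : ℝ) : ℂ)) = -1 := by
    rw [hδ_def]; exact exp_I_n_delta n hn
  have hexp2 : Complex.exp (Complex.I * n * ((-δ : ℝ) : ℂ)) = -1 := by
    rw [show ((-δ : ℝ) : ℂ) = -((δ : ℝ) : ℂ) by push_cast; ring,
      show Complex.I * (n : ℂ) * -((δ : ℝ) : ℂ) = -(Complex.I * n * ((δ : ℝ) : ℂ)) by ring,
      Complex.exp_neg, hexp1]
    norm_num
  have hs1 := shift_integral hhp hhc n hexp1
  have hs2 := shift_integral hhp hhc n hexp2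
  set J := ∫ x in (-π : ℝ)..π, h x * E n x with hJ_def
  set D : ℝ → ℂ := fun x => 2 * h x - h (x + δ) - h (x + -δ) with hD_def
  have hcont1 : Continuous fun x : ℝ => h (x + δ) := hhc.comp (continuous_add_right δ)
  have hcont2 : Continuous fun x : ℝ => h (x + -δ) := hhc.comp (continuous_add_right (-δ))
  have hint1 : IntervalIntegrable (fun x => h x * E n x) volume (-π) π :=
    (hhc.mul (E_continuous n)).intervalIntegrable _ _
  have hint2 : IntervalIntegrable (fun x => h (x + δ) * E n x) volume (-π) π :=
    (hcont1.mul (E_continuous n)).intervalIntegrable _ _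
  have hint3 : IntervalIntegrable (fun x => h (x + -δ) * E n x) volume (-π) π :=
    (hcont2.mul (E_continuous n)).intervalIntegrable _ _
  have hsum : (4 : ℂ) * J = ∫ x in (-π : ℝ)..π, D x * E n x := by
    have hfe : (fun x => D x * E n x)
        = fun x => 2 * (h x * E n x) - h (x + δ) * E n x - h (x + -δ) * E n x := by
      funext x; rw [hD_def]; ring
    rw [hfe, intervalIntegral.integral_sub ((hint1.const_mul 2).sub hint2) hint3,
      intervalIntegral.integral_sub (hint1.const_mul 2) hint2,
      intervalIntegral.integral_const_mul, hs1, hs2, ← hJ_def]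
    ring
  have hDcont : Continuous D := by
    rw [hD_def]
    exact ((continuous_const.mul hhc).sub hcont1).sub hcont2
  have h4J : 4 * ‖J‖ ≤ ∫ x in (-π : ℝ)..π, ‖D x‖ := by
    have he : ‖(4 : ℂ) * J‖ = 4 * ‖J‖ := by rw [norm_mul]; norm_num
    rw [← he, hsum]
    refine le_trans (intervalIntegral.norm_integral_le_integral_norm (by linarith)) ?_
    refine le_of_eq (intervalIntegral.integral_congr (fun x _ => ?_))
    rw [norm_mul, norm_E, mul_one]
  -- pointwise bound on D
  have hti : ∀ c : ℝ, IntervalIntegrable (fun t => g (t + c)) volume 0 δ := by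
    intro c
    have := (hgint (0 + c) (δ + c)).comp_add_right c
    rwa [show (0:ℝ) + c - c = 0 by ring, show δ + c - c = δ by ring] at this
  have hvti : ∀ c : ℝ, c ∈ s → c + δ ∈ s → IntervalIntegrable (fun t => v (t + c)) volume 0 δ := by
    intro c hc hcd
    have := (hvint (0 + c) (δ + c) (by rwa [zero_add]) (by rwa [add_comm])).comp_add_right c
    rwa [show (0:ℝ) + c - c = 0 by ring, show δ + c - c = δ by ring] at this
  have hDbound : ∀ x ∈ Set.Icc (-π) π, ‖D x‖ ≤ P (x + δ) - 2 * P x + P (x + -δ) := by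
    intro x hx
    obtain ⟨hx1, hx2⟩ := hx
    have hxs : x ∈ s := hmem _ (by linarith) (by linarith)
    have hxd1 : x + δ ∈ s := hmem _ (by linarith) (by linarith)
    have hxd2 : x + -δ ∈ s := hmem _ (by linarith) (by linarith)
    have e1 : (∫ t in (0:ℝ)..(x + δ), g t) - ∫ t in (0:ℝ)..x, g t = ∫ t in x..(x + δ), g t :=
      integral_interval_sub_left (hgint _ _) (hgint _ _)
    have e2 : (∫ t in (0:ℝ)..x, g t) - ∫ t in (0:ℝ)..(x + -δ), g t
        = ∫ t in (x + -δ)..x, g t :=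
      integral_interval_sub_left (hgint _ _) (hgint _ _)
    have hDx : D x = (∫ t in (x + -δ)..x, g t) - ∫ t in x..(x + δ), g t := by
      rw [hD_def]
      dsimp only
      rw [hftc x, hftc (x + δ), hftc (x + -δ)]
      linear_combination e2 - e1
    have c1 : (∫ t in (x + -δ)..x, g t) = ∫ t in (0:ℝ)..δ, g (t + (x + -δ)) := by
      rw [intervalIntegral.integral_comp_add_right g (x + -δ)]
      congr 1 <;> ring
    have c2 : (∫ t in x..(x + δ), g t) = ∫ t in (0:ℝ)..δ, g (t + x) := by
      rw [intervalIntegral.integral_comp_add_right g x]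
      congr 1 <;> ring
    have hDx2 : D x = ∫ t in (0:ℝ)..δ, (g (t + (x + -δ)) - g (t + x)) := by
      rw [hDx, c1, c2, intervalIntegral.integral_sub (hti _) (hti _)]
    have hb1 : ‖D x‖ ≤ ∫ t in (0:ℝ)..δ, ‖g (t + (x + -δ)) - g (t + x)‖ := by
      rw [hDx2]
      exact intervalIntegral.norm_integral_le_integral_norm hδ0.le
    have hxds : x + -δ + δ ∈ s := by rw [show x + -δ + δ = x by ring]; exact hxs
    have hxdd : x + δ ∈ s := hxd1
    have hb2 : (∫ t in (0:ℝ)..δ, ‖g (t + (x + -δ)) - g (t + x)‖)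
        ≤ ∫ t in (0:ℝ)..δ, (v (t + x) - v (t + (x + -δ))) := by
      refine intervalIntegral.integral_mono_on hδ0.le (((hti _).sub (hti _)).norm)
        ((hvti x hxs hxd1).sub (hvti (x + -δ) hxd2 hxds)) ?_
      intro t ht
      obtain ⟨ht1, ht2⟩ := ht
      have m1 : t + (x + -δ) ∈ s := hmem _ (by linarith) (by linarith)
      have m2 : t + x ∈ s := hmem _ (by linarith) (by linarith)
      rw [norm_sub_rev]
      exact norm_sub_le_var hlbv (hmem _ le_rfl (by linarith)) m1 m2 (by linarith)
    have d1 : (∫ t in (0:ℝ)..δ, v (t + x)) = P (x + δ) - P x := by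
      rw [intervalIntegral.integral_comp_add_right v x, zero_add,
        show δ + x = x + δ by ring]
      have := hPadd x (x + δ) hxs hxd1
      linarith
    have d2 : (∫ t in (0:ℝ)..δ, v (t + (x + -δ))) = P x - P (x + -δ) := by
      rw [intervalIntegral.integral_comp_add_right v (x + -δ), zero_add,
        show δ + (x + -δ) = x by ring]
      have := hPadd (x + -δ) x hxd2 hxs
      linarith
    have hb3 : (∫ t in (0:ℝ)..δ, (v (t + x) - v (t + (x + -δ))))
        = (P (x + δ) - P x) - (P x - P (x + -δ)) := by
      rw [intervalIntegral.integral_sub (hvti x hxs hxd1) (hvti (x + -δ) hxd2 hxds), d1, d2]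
    calc ‖D x‖ ≤ _ := hb1
      _ ≤ _ := hb2
      _ = _ := hb3
      _ = P (x + δ) - 2 * P x + P (x + -δ) := by ring
  -- integrate the bound
  have hPti : ∀ c : ℝ, -(2 * π) ≤ -π + c → π + c ≤ 2 * π →
      IntervalIntegrable (fun x => P (x + c)) volume (-π) π := by
    intro c h1 h2
    have := (hPint (-π + c) (π + c) (hmem _ h1 (by linarith)) (hmem _ (by linarith) h2)).comp_add_right c
    rwa [show -π + c - c = -π by ring, show π + c - c = π by ring] at this
  have hPmid : IntervalIntegrable P volume (-π) π :=
    hPint _ _ (hmem _ (by linarith) (by linarith)) (hmem _ (by linarith) (by linarith))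
  have houter : (∫ x in (-π:ℝ)..π, ‖D x‖)
      ≤ ∫ x in (-π:ℝ)..π, (P (x + δ) - 2 * P x + P (x + -δ)) := by
    exact intervalIntegral.integral_mono_on (by linarith)
      (hDcont.norm.intervalIntegrable _ _)
      (((hPti δ (by linarith) (by linarith)).sub (hPmid.const_mul 2)).add
        (hPti (-δ) (by linarith) (by linarith)))
      hDbound
  have hsplit : (∫ x in (-π:ℝ)..π, (P (x + δ) - 2 * P x + P (x + -δ)))
      = ((∫ x in (-π:ℝ)..π, P (x + δ)) - ∫ x in (-π:ℝ)..π, P x)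
        - ((∫ x in (-π:ℝ)..π, P x) - ∫ x in (-π:ℝ)..π, P (x + -δ)) := by
    rw [intervalIntegral.integral_add
        ((hPti δ (by linarith) (by linarith)).sub (hPmid.const_mul 2))
        (hPti (-δ) (by linarith) (by linarith)),
      intervalIntegral.integral_sub (hPti δ (by linarith) (by linarith)) (hPmid.const_mul 2),
      intervalIntegral.integral_const_mul]
    ring
  have t1 : (∫ x in (-π:ℝ)..π, P (x + δ)) = ∫ x in (-π + δ : ℝ)..(π + δ), P x :=
    intervalIntegral.integral_comp_add_right P δ
  have t2 : (∫ x in (-π:ℝ)..π, P (x + -δ)) = ∫ x in (-π + -δ : ℝ)..(π + -δ), P x :=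
    intervalIntegral.integral_comp_add_right P (-δ)
  have adj : ∀ a b c : ℝ, a ∈ s → b ∈ s → c ∈ s →
      (∫ x in a..b, P x) + (∫ x in b..c, P x) = ∫ x in a..c, P x := fun a b c ha hb hc =>
    integral_add_adjacent_intervals (hPint a b ha hb) (hPint b c hb hc)
  have mπ : (-π : ℝ) ∈ s := hmem _ (by linarith) (by linarith)
  have mπ' : (π : ℝ) ∈ s := hmem _ (by linarith) (by linarith)
  have mδ1 : (-π + δ : ℝ) ∈ s := hmem _ (by linarith) (by linarith)
  have mδ2 : (π + δ : ℝ) ∈ s := hmem _ (by linarith) (by linarith)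
  have mδ3 : (-π + -δ : ℝ) ∈ s := hmem _ (by linarith) (by linarith)
  have mδ4 : (π + -δ : ℝ) ∈ s := hmem _ (by linarith) (by linarith)
  have A1 : (∫ x in (-π + δ : ℝ)..(π + δ), P x) - (∫ x in (-π:ℝ)..π, P x)
      = (∫ x in (π:ℝ)..(π + δ), P x) - (∫ x in (-π:ℝ)..(-π + δ), P x) := by
    have u1 := adj (-π) (-π + δ) (π + δ) mπ mδ1 mδ2
    have u2 := adj (-π) π (π + δ) mπ mπ' mδ2
    linarith
  have A2 : (∫ x in (-π:ℝ)..π, P x) - (∫ x in (-π + -δ : ℝ)..(π + -δ), P x)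
      = (∫ x in (π + -δ : ℝ)..π, P x) - (∫ x in (-π + -δ : ℝ)..(-π), P x) := by
    have u1 := adj (-π + -δ) (-π) (π + -δ) mδ3 mπ mδ4
    have u2 := adj (-π) (π + -δ) π mπ mδ4 mπ'
    linarith
  have B1 : (∫ x in (π:ℝ)..(π + δ), P x) ≤ δ * P (π + δ) := by
    have hb : (∫ x in (π:ℝ)..(π + δ), P x) ≤ ∫ x in (π:ℝ)..(π + δ), P (π + δ) :=
      intervalIntegral.integral_mono_on (by linarith) (hPint _ _ mπ' mδ2)
        intervalIntegrable_const
        (fun u hu => hPmono (hmem _ (by linarith [hu.1]) (by linarith [hu.2]))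
          mδ2 hu.2)
    rwa [intervalIntegral.integral_const, smul_eq_mul,
      show π + δ - π = δ by ring] at hb
  have B2 : δ * P (-π) ≤ ∫ x in (-π:ℝ)..(-π + δ), P x := by
    have hb : (∫ x in (-π:ℝ)..(-π + δ), P (-π)) ≤ ∫ x in (-π:ℝ)..(-π + δ), P x :=
      intervalIntegral.integral_mono_on (by linarith) intervalIntegrable_const
        (hPint _ _ mπ mδ1)
        (fun u hu => hPmono mπ (hmem _ (by linarith [hu.1]) (by linarith [hu.2])) hu.1)
    rwa [intervalIntegral.integral_const, smul_eq_mul,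
      show -π + δ - -π = δ by ring] at hb
  have B3 : (∫ x in (-π + -δ : ℝ)..(-π), P x) ≤ δ * P (-π) := by
    have hb : (∫ x in (-π + -δ : ℝ)..(-π), P x) ≤ ∫ x in (-π + -δ : ℝ)..(-π), P (-π) :=
      intervalIntegral.integral_mono_on (by linarith) (hPint _ _ mδ3 mπ)
        intervalIntegrable_const
        (fun u hu => hPmono (hmem _ (by linarith [hu.1]) (by linarith [hu.2])) mπ hu.2)
    rwa [intervalIntegral.integral_const, smul_eq_mul,
      show -π - (-π + -δ) = δ by ring] at hb
  have B4 : δ * P (π + -δ) ≤ ∫ x in (π + -δ : ℝ)..π, P x := by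
    have hb : (∫ x in (π + -δ : ℝ)..π, P (π + -δ)) ≤ ∫ x in (π + -δ : ℝ)..π, P x :=
      intervalIntegral.integral_mono_on (by linarith) intervalIntegrable_const
        (hPint _ _ mδ4 mπ')
        (fun u hu => hPmono mδ4 (hmem _ (by linarith [hu.1]) (by linarith [hu.2])) hu.1)
    rwa [intervalIntegral.integral_const, smul_eq_mul,
      show π - (π + -δ) = δ by ring] at hb
  have C1 : P (π + δ) - P (π + -δ) ≤ 2 * δ * V := by
    have hadd := hPadd (π + -δ) (π + δ) mδ4 mδ2
    have hle : (∫ t in (π + -δ : ℝ)..(π + δ), v t) ≤ ∫ t in (π + -δ : ℝ)..(π + δ), V :=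
      intervalIntegral.integral_mono_on (by linarith) (hvint _ _ mδ4 mδ2)
        intervalIntegrable_const
        (fun u hu => hvleV u (hmem _ (by linarith [hu.1]) (by linarith [hu.2])))
    rw [intervalIntegral.integral_const, smul_eq_mul,
      show π + δ - (π + -δ) = 2 * δ by ring] at hle
    linarith
  have hfinal : (∫ x in (-π:ℝ)..π, (P (x + δ) - 2 * P x + P (x + -δ))) ≤ 2 * δ ^ 2 * V := by
    have hmul : δ * (P (π + δ) - P (π + -δ)) ≤ δ * (2 * δ * V) :=
      mul_le_mul_of_nonneg_left C1 hδ0.le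
    have hδP1 : δ * (P (π + δ) - P (π + -δ)) = δ * P (π + δ) - δ * P (π + -δ) := by ring
    have hδP2 : δ * (2 * δ * V) = 2 * δ ^ 2 * V := by ring
    rw [hδP1, hδP2] at hmul
    rw [hsplit, t1, t2, A1, A2]
    linarith
  have hgoal : 4 * ‖J‖ ≤ 2 * δ ^ 2 * V := le_trans h4J (le_trans houter hfinal)
  nlinarith [hgoal]


lemma byparts {φ : ℝ → ℂ} (hp : Function.Periodic φ (2 * π)) (hd : Differentiable ℝ φ)
    (hd' : Continuous (deriv φ)) (n : ℤ) (hn : n ≠ 0) :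
    (∫ x in (-π : ℝ)..π, φ x * E n x)
      = (1 / (Complex.I * n)) * ∫ x in (-π : ℝ)..π, deriv φ x * E n x := by
  have hπ := Real.pi_pos
  have hnc : ((n : ℂ)) ≠ 0 := by exact_mod_cast hn
  have ha : (-Complex.I * n : ℂ) ≠ 0 := by
    simp [Complex.I_ne_zero, hnc]
  set v : ℝ → ℂ := fun x => Complex.exp (-Complex.I * n * x) / (-Complex.I * n) with hv_def
  have hv : ∀ x : ℝ, HasDerivAt v (E n x) x := by
    intro x
    have h1 : HasDerivAt (fun y : ℝ => (y : ℂ)) 1 x := by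
      simpa using (hasDerivAt_id x).ofReal_comp
    have h2 : HasDerivAt (fun y : ℝ => (-Complex.I * n) * (y : ℂ)) (-Complex.I * n) x := by
      simpa using h1.const_mul (-Complex.I * (n : ℂ))
    have h3 : HasDerivAt (fun y : ℝ => Complex.exp (-Complex.I * n * y))
        (Complex.exp (-Complex.I * n * x) * (-Complex.I * n)) x := h2.cexp
    have h4 := h3.div_const (-Complex.I * n)
    have heq : Complex.exp (-Complex.I * n * x) * (-Complex.I * n) / (-Complex.I * n) = E n x := by
      rw [mul_div_assoc, div_self ha, mul_one]; rfl
    rw [heq] at h4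
    exact h4
  have key := intervalIntegral.integral_mul_deriv_eq_deriv_mul
    (u := φ) (v := v) (u' := deriv φ) (v' := E n) (a := (-π : ℝ)) (b := π)
    (fun x _ => (hd x).hasDerivAt) (fun x _ => hv x)
    (hd'.intervalIntegrable _ _) ((E_continuous n).intervalIntegrable _ _)
  have hφb : φ π = φ (-π) := by
    have := hp (-π); rwa [show -π + 2 * π = π by ring] at this
  have hvb : v π = v (-π) := by
    simp only [hv_def]
    congr 1
    rw [show -Complex.I * (n : ℂ) * ((π : ℝ) : ℂ)
        = -Complex.I * n * ((-π : ℝ) : ℂ) + (-n : ℤ) * (2 * (π : ℂ) * Complex.I) by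
          push_cast; ring,
      Complex.exp_add, Complex.exp_int_mul_two_pi_mul_I, mul_one]
  rw [key, hφb, hvb]
  have : (∫ x in (-π : ℝ)..π, deriv φ x * v x)
      = (∫ x in (-π : ℝ)..π, deriv φ x * E n x) / (-Complex.I * n) := by
    rw [← intervalIntegral.integral_div]
    exact intervalIntegral.integral_congr (fun x _ => by
      simp only [hv_def]; unfold E; ring)
  rw [this]
  field_simp
  ring

lemma periodic_deriv {f : ℝ → ℂ} {c : ℝ} (hf : Function.Periodic f c) :
    Function.Periodic (deriv f) c := fun x => by
  have h1 : deriv (fun y => f (y + c)) x = deriv f (x + c) := deriv_comp_add_const f c x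
  have h2 : (fun y => f (y + c)) = f := funext fun y => hf y
  rw [← h1, h2]


end FourierBVAux

open FourierBVAux

/-- If f is 2π-periodic, (k−1)-times absolutely continuously differentiable
(expressed via the fundamental theorem of calculus: f^(k−1) is an indefinite
integral of f^(k)), and f^(k) is of bounded variation on [0, 2π], then the
Fourier coefficients d_n = (1/√(2π)) ∫_{−π}^{π} f(x) e^{−inx} dx satisfy
d_n = O(1/|n|^{k+1}) as |n| → ∞. -/

theorem fourier_coeff_decay_of_smooth_bv (k : ℕ) (hk : 1 ≤ k) (f : ℝ → ℂ)
    (hper : Function.Periodic f (2 * π))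
    (hsmooth : ContDiff ℝ (k - 1 : ℕ) f)
    (hint : LocallyIntegrable (iteratedDeriv k f))
    (hAC : ∀ x : ℝ, iteratedDeriv (k - 1) f x =
      iteratedDeriv (k - 1) f 0 + ∫ t in (0:ℝ)..x, iteratedDeriv k f t)
    (hBV : BoundedVariationOn (iteratedDeriv k f) (Set.Icc 0 (2 * π))) :
    ∃ C : ℝ, ∀ n : ℤ, n ≠ 0 →
      ‖(1 / Real.sqrt (2 * π) : ℂ) *
          ∫ x in (-π:ℝ)..π, f x * Complex.exp (-Complex.I * n * x)‖
        ≤ C / |(n : ℝ)| ^ (k + 1) := by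
  have hπ := Real.pi_pos
  have hperm : ∀ m : ℕ, Function.Periodic (iteratedDeriv m f) (2 * π) := by
    intro m
    induction m with
    | zero => simpa [iteratedDeriv_zero] using hper
    | succ m ih => rw [iteratedDeriv_succ]; exact periodic_deriv ih
  have hhc : Continuous (iteratedDeriv (k - 1) f) :=
    hsmooth.continuous_iteratedDeriv (k - 1) (by exact_mod_cast le_rfl)
  have hBV2 : BoundedVariationOn (iteratedDeriv k f) (Set.Icc (-(2 * π)) (2 * π)) := by
    set g : ℝ → ℂ := iteratedDeriv k f with hg_def
    have hE1 : eVariationOn g (Set.Icc (-(2 * π)) 0) = eVariationOn g (Set.Icc 0 (2 * π)) := by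
      have hgeq : (g ∘ fun x : ℝ => x + -(2 * π)) = g := by
        funext x
        simp only [Function.comp_apply]
        rw [show x + -(2 * π) = x - 2 * π by ring]
        exact (hperm k).sub_eq x
      have hmono : MonotoneOn (fun x : ℝ => x + -(2 * π)) (Set.Icc 0 (2 * π)) :=
        fun a _ b _ hab => by dsimp only; linarith
      have himg : (fun x : ℝ => x + -(2 * π)) '' (Set.Icc 0 (2 * π)) = Set.Icc (-(2 * π)) 0 := by
        rw [Set.image_add_const_Icc]
        congr 1 <;> ring
      have hcomp := eVariationOn.comp_eq_of_monotoneOn g (fun x : ℝ => x + -(2 * π)) hmono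
      rw [hgeq, himg] at hcomp
      exact hcomp.symm
    have hsum := eVariationOn.Icc_add_Icc (s := (Set.univ : Set ℝ)) g
      (show -(2 * π) ≤ (0:ℝ) by linarith) (show (0:ℝ) ≤ 2 * π by linarith) (Set.mem_univ 0)
    simp only [Set.univ_inter] at hsum
    show eVariationOn g (Set.Icc (-(2 * π)) (2 * π)) ≠ ⊤
    rw [← hsum]
    exact ENNReal.add_ne_top.mpr ⟨hE1 ▸ hBV, hBV⟩
  set V : ℝ := (eVariationOn (iteratedDeriv k f) (Set.Icc (-(2 * π)) (2 * π))).toReal with hV_def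
  have hV0 : 0 ≤ V := ENNReal.toReal_nonneg
  refine ⟨1 / Real.sqrt (2 * π) * (π ^ 2 * V / 2), ?_⟩
  intro n hn
  have hn1 : (1 : ℝ) ≤ |(n : ℝ)| := by exact_mod_cast Int.one_le_abs hn
  have hN0 : (0 : ℝ) < |(n : ℝ)| := lt_of_lt_of_le one_pos hn1
  have stepA : ∀ j : ℕ, j ≤ k - 1 →
      (∫ x in (-π:ℝ)..π, f x * E n x)
        = (1 / (Complex.I * n)) ^ j * ∫ x in (-π:ℝ)..π, iteratedDeriv j f x * E n x := by
    intro j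
    induction j with
    | zero => intro _; simp [iteratedDeriv_zero]
    | succ j ih =>
      intro hj
      have hj' : j ≤ k - 1 := by omega
      have hjlt : j < k - 1 := by omega
      have hdiff : Differentiable ℝ (iteratedDeriv j f) :=
        hsmooth.differentiable_iteratedDeriv j (by exact_mod_cast hjlt)
      have hdc : Continuous (deriv (iteratedDeriv j f)) := by
        rw [← iteratedDeriv_succ]
        exact hsmooth.continuous_iteratedDeriv (j + 1)
          (by exact_mod_cast (show j + 1 ≤ k - 1 by omega))
      have hbp := byparts (hperm j) hdiff hdc n hn
      rw [ih hj', hbp, ← iteratedDeriv_succ, pow_succ]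
      ring
  have hA := stepA (k - 1) le_rfl
  have hkey := key hhc (hperm (k - 1)) hint hAC hBV2 n hn
  have hnorm1 : ‖(1 / Real.sqrt (2 * π) : ℂ)‖ = 1 / Real.sqrt (2 * π) := by
    rw [norm_div, norm_one, Complex.norm_real, Real.norm_eq_abs,
      _root_.abs_of_nonneg (Real.sqrt_nonneg _)]
  have hnorm2 : ‖(1 / (Complex.I * (n:ℂ)) : ℂ)‖ = 1 / |(n : ℝ)| := by
    rw [norm_div, norm_one, norm_mul, Complex.norm_I, one_mul]
    norm_cast
  calc ‖(1 / Real.sqrt (2 * π) : ℂ) *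
          ∫ x in (-π:ℝ)..π, f x * Complex.exp (-Complex.I * n * x)‖
      = ‖(1 / Real.sqrt (2 * π) : ℂ)‖ * ‖∫ x in (-π:ℝ)..π, f x * E n x‖ := by
        rw [norm_mul]; rfl
    _ = (1 / Real.sqrt (2 * π)) * ((1 / |(n : ℝ)|) ^ (k - 1)
          * ‖∫ x in (-π:ℝ)..π, iteratedDeriv (k - 1) f x * E n x‖) := by
        rw [hnorm1, hA, norm_mul, norm_pow, hnorm2]
    _ ≤ (1 / Real.sqrt (2 * π)) * ((1 / |(n : ℝ)|) ^ (k - 1)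
          * ((π / |(n : ℝ)|) ^ 2 * V / 2)) := by
        gcongr <;> positivity
    _ = (1 / Real.sqrt (2 * π) * (π ^ 2 * V / 2)) / |(n : ℝ)| ^ (k + 1) := by
        rw [show k + 1 = (k - 1) + 2 by omega, pow_add]
        field_simp
        ring_nf
        simp
        rw [mul_inv_cancel₀ (pow_ne_zero _ hN0.ne'), one_mul]
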